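/- For every α : Finset Q, every β ∈ S_X and every γ ∈ Z_X(S): G_{α Δ β} = G_α and H_{α Δ γ} = H_α. (Lemma 1, invariance of G under stabilizers and of H under undetectable X errors.) -/
import Mathlib


open Finset
open scoped symmDiff Matrix

namespace CC

variable {Q : Type*} [Fintype Q] [DecidableEq Q]

/-- A subgroup of the abelian group `(Finset Q, ∆)`. -/
def IsSubgroup (S : Set (Finset Q)) : Prop :=
  ∅ ∈ S ∧ ∀ a ∈ S, ∀ b ∈ S, a ∆ b ∈ S

/-- The subgroup of `(Finset Q, ∆)` generated by a set. -/
def closure (T : Set (Finset Q)) : Set (Finset Q) :=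
  ⋂₀ {S : Set (Finset Q) | IsSubgroup S ∧ T ⊆ S}

/-- A CSS stabilizer code on the qubits `Q`. -/
structure CSS (Q : Type*) [Fintype Q] [DecidableEq Q] where
  SX : Set (Finset Q)
  SZ : Set (Finset Q)
  hSX : IsSubgroup SX
  hSZ : IsSubgroup SZ
  comm : ∀ a ∈ SZ, ∀ b ∈ SX, 2 ∣ (a ∩ b).card

def ZX (C : CSS Q) : Set (Finset Q) := {γ | ∀ f ∈ C.SZ, 2 ∣ (γ ∩ f).card}

def ZZ (C : CSS Q) : Set (Finset Q) := {z | ∀ c ∈ C.SX, 2 ∣ (z ∩ c).card}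

/-- Duality assumption. -/
def Dual (C : CSS Q) : Prop :=
  C.SZ = {z | ∀ γ ∈ ZX C, 2 ∣ (z ∩ γ).card} ∧
  C.SX = {c | ∀ z ∈ ZZ C, 2 ∣ (c ∩ z).card}

def LogicalX (C : CSS Q) (l : Finset Q) : Prop := l ∈ ZX C ∧ l ∉ C.SX

def LogicalZ (C : CSS Q) (l : Finset Q) : Prop := l ∈ ZZ C ∧ l ∉ C.SZ

/-- Single-logical-qubit assumption. -/
def SingleQubit (C : CSS Q) : Prop :=
  (ZX C ≠ C.SX ∧ ∀ l l', LogicalX C l → LogicalX C l' → l ∆ l' ∈ C.SX) ∧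
  (ZZ C ≠ C.SZ ∧ ∀ l l', LogicalZ C l → LogicalZ C l' → l ∆ l' ∈ C.SZ)

/-- Intersection axiom. -/
def Inter (C : CSS Q) : Prop :=
  ZZ C = {x | ∃ α ∈ ZX C, ∃ β ∈ ZX C, x = α ∩ β}

def G (C : CSS Q) (α : Finset Q) : Set (Finset Q) :=
  closure (C.SZ ∪ {x | ∃ β ∈ ZX C, x = α ∩ β})

def H (C : CSS Q) (α : Finset Q) : Set (Finset Q) :=
  closure (C.SZ ∪ {x | ∃ β ∈ C.SX, x = α ∩ β})

def Zof (K : Set (Finset Q)) : Set (Finset Q) := {γ | ∀ h ∈ K, 2 ∣ (γ ∩ h).card}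

def Tolerable (C : CSS Q) (α : Finset Q) : Prop := ∀ z ∈ G C α, ¬ LogicalZ C z

def g (b : Q → ℤ) (s : Finset Q) : ℤ := ∑ q ∈ s, b q

/-- T-invariance assumption. -/
def TInv (C : CSS Q) (b : Q → ℤ) : Prop :=
  (∀ β ∈ C.SX, (8 : ℤ) ∣ g b β) ∧
  (∀ β ∈ C.SX, ∀ γ ∈ ZX C, (8 : ℤ) ∣ (g b β - 2 * g b (γ ∩ β)))

def E (C : CSS Q) (b : Q → ℤ) (α : Finset Q) : Set (Finset Q) :=
  {z | ∀ γ ∈ Zof (G C α), g b (γ ∩ α) ≡ 2 * ((z ∩ γ).card : ℤ) [ZMOD 4]}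

/- Quantum setting -/

abbrev M (Q : Type*) [Fintype Q] [DecidableEq Q] :=
  Matrix (Q → ZMod 2) (Q → ZMod 2) ℂ

def supp (v : Q → ZMod 2) : Finset Q := Finset.univ.filter (fun q => v q = 1)

def ind (α : Finset Q) : Q → ZMod 2 := fun q => if q ∈ α then 1 else 0

def XM (α : Finset Q) : M Q :=
  Matrix.of fun u v => if u = v + ind α then (1 : ℂ) else 0

noncomputable def ZM (α : Finset Q) : M Q :=
  Matrix.diagonal fun v => (-1 : ℂ) ^ (supp v ∩ α).card

noncomputable def AM (b : Q → ℤ) (α : Finset Q) : M Q :=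
  Matrix.diagonal fun v => Complex.I ^ (g b (α ∩ supp v))

noncomputable def UM (b : Q → ℤ) : M Q :=
  Matrix.diagonal fun v => Complex.exp (Real.pi * Complex.I / 4) ^ (g b (supp v))

def Encoded (C : CSS Q) (ρ : M Q) : Prop :=
  ρ.trace = 1 ∧
  (∀ c ∈ C.SX, XM c * ρ = ρ ∧ ρ * XM c = ρ) ∧
  (∀ f ∈ C.SZ, ZM f * ρ = ρ ∧ ρ * ZM f = ρ)

instance : Std.Commutative (α := Finset Q) (· ∆ ·) := ⟨symmDiff_comm⟩
instance : Std.Associative (α := Finset Q) (· ∆ ·) := ⟨symmDiff_assoc⟩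

/-- Iterated symmetric difference over a finite index set. -/
def bigΔ {ι : Type*} (s : Finset ι) (f : ι → Finset Q) : Finset Q :=
  s.fold (· ∆ ·) ∅ f

lemma closure_isSubgroup (T : Set (Finset Q)) : IsSubgroup (closure T) := by
  constructor
  · intro S hS
    exact hS.1.1
  · intro a ha b hb S hS
    exact hS.1.2 a (ha S hS) b (hb S hS)

lemma subset_closure (T : Set (Finset Q)) : T ⊆ closure T := by
  intro x hx S hS
  exact hS.2 hx

lemma closure_min {T S : Set (Finset Q)} (h1 : IsSubgroup S) (h2 : T ⊆ S) :
    closure T ⊆ S := fun _ hx => hx S ⟨h1, h2⟩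

lemma closure_eq_of {T1 T2 : Set (Finset Q)} (h1 : T1 ⊆ closure T2) (h2 : T2 ⊆ closure T1) :
    closure T1 = closure T2 :=
  Set.Subset.antisymm (closure_min (closure_isSubgroup T2) h1)
    (closure_min (closure_isSubgroup T1) h2)

lemma SX_subset_ZX (C : CSS Q) : C.SX ⊆ ZX C := by
  intro b hb f hf
  have := C.comm f hf b hb
  rwa [inter_comm] at this

lemma inter_mem_SZ (C : CSS Q) (hdual : Dual C) (hinter : Inter C)
    {b d : Finset Q} (hb : b ∈ C.SX) (hd : d ∈ ZX C) : b ∩ d ∈ C.SZ := by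
  rw [hdual.1]
  intro γ' hγ'
  have hmem : d ∩ γ' ∈ ZZ C := by
    rw [hinter]
    exact ⟨d, hd, γ', hγ', rfl⟩
  have := hmem b hb
  have heq : b ∩ d ∩ γ' = d ∩ γ' ∩ b := by
    ext x; simp only [mem_inter]; tauto
  rwa [heq]

lemma symmDiff_inter_distrib (a b c : Finset Q) : (a ∆ b) ∩ c = (a ∩ c) ∆ (b ∩ c) := by
  ext x
  simp only [mem_inter, Finset.mem_symmDiff]
  tauto

/-- Lemma 1: invariance of `G` under stabilizers and of `H` under undetectable `X` errors. -/
theorem G_H_invariance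
    (C : CSS Q) (hdual : Dual C) (hinter : Inter C)
    (α β γ : Finset Q) (hβ : β ∈ C.SX) (hγ : γ ∈ ZX C) :
    G C (α ∆ β) = G C α ∧ H C (α ∆ γ) = H C α := by
  constructor
  · -- G invariance
    have key : ∀ α' : Finset Q,
        (C.SZ ∪ {x | ∃ δ ∈ ZX C, x = (α' ∆ β) ∩ δ}) ⊆ G C α' := by
      intro α' x hx
      rcases hx with hx | ⟨δ, hδ, rfl⟩
      · exact subset_closure _ (Or.inl hx)
      · rw [symmDiff_inter_distrib]
        have h1 : α' ∩ δ ∈ G C α' := subset_closure _ (Or.inr ⟨δ, hδ, rfl⟩)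
        have h2 : β ∩ δ ∈ G C α' := subset_closure _ (Or.inl (inter_mem_SZ C hdual hinter hβ hδ))
        exact (closure_isSubgroup _).2 _ h1 _ h2
    apply closure_eq_of
    · exact key α
    · have := key (α ∆ β)
      have hsimp : (α ∆ β) ∆ β = α := by
        rw [symmDiff_assoc, symmDiff_self, symmDiff_bot]
      rw [hsimp] at this
      exact this
  · -- H invariance
    have key2 : ∀ α' : Finset Q,
        (C.SZ ∪ {x | ∃ b ∈ C.SX, x = (α' ∆ γ) ∩ b}) ⊆ H C α' := by
      intro α' x hx
      rcases hx with hx | ⟨b, hb, rfl⟩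
      · exact subset_closure _ (Or.inl hx)
      · rw [symmDiff_inter_distrib]
        have h1 : α' ∩ b ∈ H C α' := subset_closure _ (Or.inr ⟨b, hb, rfl⟩)
        have h2 : γ ∩ b ∈ H C α' := by
          have : b ∩ γ ∈ C.SZ := inter_mem_SZ C hdual hinter hb hγ
          rw [inter_comm] at this
          exact subset_closure _ (Or.inl this)
        exact (closure_isSubgroup _).2 _ h1 _ h2
    apply closure_eq_of
    · exact key2 α
    · have := key2 (α ∆ γ)
      have hsimp : (α ∆ γ) ∆ γ = α := by
        rw [symmDiff_assoc, symmDiff_self, symmDiff_bot]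
      rw [hsimp] at this
      exact this

end CC
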